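/- For every positive integer m, twice the sum, over all compositions (c_1, …, c_k) of m, of the product Catalan(c_1) · Catalan(c_2) ⋯ Catalan(c_k), equals binom(2m, m). -/

import Mathlib

open Finset

/-- Key binomial/Catalan identity. -/
lemma keyK (n : ℕ) :
    Nat.centralBinom (n + 2) + 2 * catalan (n + 1) = 4 * Nat.centralBinom (n + 1) := by
  apply Nat.eq_of_mul_eq_mul_left (show 0 < n + 2 by omega)
  have h1 := Nat.succ_mul_centralBinom_succ (n + 1)
  have h2 := succ_mul_catalan_eq_centralBinom (n + 1)
  calc (n + 2) * (Nat.centralBinom (n + 2) + 2 * catalan (n + 1))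
      = (n + 1 + 1) * Nat.centralBinom (n + 1 + 1)
        + 2 * ((n + 1 + 1) * catalan (n + 1)) := by ring
    _ = 2 * (2 * (n + 1) + 1) * Nat.centralBinom (n + 1)
        + 2 * Nat.centralBinom (n + 1) := by rw [h1, h2]
    _ = (n + 2) * (4 * Nat.centralBinom (n + 1)) := by ring

/-- Triangular double sum swap. -/
lemma triSwap (F : ℕ → ℕ → ℕ → ℕ) (n : ℕ) :
    ∑ j ∈ range (n + 1), ∑ i ∈ range (j + 1), F i (j - i) (n - j)
      = ∑ i ∈ range (n + 1), ∑ t ∈ range (n - i + 1), F i t (n - i - t) := by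
  rw [Finset.sum_sigma' (range (n + 1)) (fun j => range (j + 1))
      (fun j i => F i (j - i) (n - j)),
    Finset.sum_sigma' (range (n + 1)) (fun i => range (n - i + 1))
      (fun i t => F i t (n - i - t))]
  refine Finset.sum_nbij' (fun p => ⟨p.2, p.1 - p.2⟩) (fun q => ⟨q.1 + q.2, q.1⟩)
    ?_ ?_ ?_ ?_ ?_
  · rintro ⟨j, i⟩ hp
    simp only [Finset.mem_sigma, Finset.mem_range] at hp ⊢
    omega
  · rintro ⟨i, t⟩ hq
    simp only [Finset.mem_sigma, Finset.mem_range] at hq ⊢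
    omega
  · rintro ⟨j, i⟩ hp
    simp only [Finset.mem_sigma, Finset.mem_range] at hp
    have h : i + (j - i) = j := by omega
    simp [h]
  · rintro ⟨i, t⟩ hq
    simp only [Finset.mem_sigma, Finset.mem_range] at hq
    have h : i + t - i = t := by omega
    simp [h]
  · rintro ⟨j, i⟩ hp
    simp only [Finset.mem_sigma, Finset.mem_range] at hp
    have h2 : n - i - (j - i) = n - j := by omega
    simp only [h2]

/-- Convolution of Catalan numbers with central binomial coefficients. -/
lemma convJ (n : ℕ) :
    2 * ∑ k ∈ range (n + 1), catalan k * Nat.centralBinom (n - k)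
      = Nat.centralBinom (n + 1) := by
  induction n using Nat.strong_induction_on with
  | _ n IH =>
    match n with
    | 0 => simp [Nat.centralBinom]
    | Nat.succ n =>
      show 2 * ∑ k ∈ range (n + 2), catalan k * Nat.centralBinom (n + 1 - k)
        = Nat.centralBinom (n + 2)
      -- split off the k = 0 term
      have h0 : ∑ k ∈ range (n + 2), catalan k * Nat.centralBinom (n + 1 - k)
          = ∑ j ∈ range (n + 1), catalan (j + 1) * Nat.centralBinom (n - j)
            + Nat.centralBinom (n + 1) := by
        rw [Finset.sum_range_succ'
          (fun k => catalan k * Nat.centralBinom (n + 1 - k)) (n + 1)]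
        simp [Nat.succ_sub_succ]
      -- expand catalan (j+1) and swap the double sum
      have hT : ∑ j ∈ range (n + 1), catalan (j + 1) * Nat.centralBinom (n - j)
          = ∑ i ∈ range (n + 1), catalan i *
              ∑ k ∈ range (n - i + 1), catalan k * Nat.centralBinom (n - i - k) := by
        have hexp : ∀ j, catalan (j + 1)
            = ∑ i ∈ range (j + 1), catalan i * catalan (j - i) := by
          intro j
          rw [catalan_succ]
          exact (Finset.sum_range fun i => catalan i * catalan (j - i)).symm
        calc ∑ j ∈ range (n + 1), catalan (j + 1) * Nat.centralBinom (n - j)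
            = ∑ j ∈ range (n + 1), ∑ i ∈ range (j + 1),
                catalan i * catalan (j - i) * Nat.centralBinom (n - j) := by
              refine Finset.sum_congr rfl fun j _ => ?_
              rw [hexp j, Finset.sum_mul]
          _ = ∑ i ∈ range (n + 1), ∑ t ∈ range (n - i + 1),
                catalan i * catalan t * Nat.centralBinom (n - i - t) :=
              triSwap (fun i t r => catalan i * catalan t * Nat.centralBinom r) n
          _ = _ := by
              refine Finset.sum_congr rfl fun i _ => ?_
              rw [Finset.mul_sum]
              exact Finset.sum_congr rfl fun t _ => by ring
      -- use the induction hypothesis on each inner sum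
      have h2T : 2 * ∑ i ∈ range (n + 1), catalan i *
            ∑ k ∈ range (n - i + 1), catalan k * Nat.centralBinom (n - i - k)
          = ∑ i ∈ range (n + 1), catalan i * Nat.centralBinom (n - i + 1) := by
        rw [Finset.mul_sum]
        refine Finset.sum_congr rfl fun i hi => ?_
        simp only [Finset.mem_range] at hi
        have hIH := IH (n - i) (by omega)
        calc 2 * (catalan i * ∑ k ∈ range (n - i + 1),
                catalan k * Nat.centralBinom (n - i - k))
            = catalan i * (2 * ∑ k ∈ range (n - i + 1),
                catalan k * Nat.centralBinom (n - i - k)) := by ring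
          _ = catalan i * Nat.centralBinom (n - i + 1) := by rw [hIH]
      -- the shifted convolution
      have h3 : ∑ k ∈ range (n + 2), catalan k * Nat.centralBinom (n + 1 - k)
          = ∑ i ∈ range (n + 1), catalan i * Nat.centralBinom (n - i + 1)
            + catalan (n + 1) := by
        rw [Finset.sum_range_succ
          (fun k => catalan k * Nat.centralBinom (n + 1 - k)) (n + 1)]
        simp only [Nat.sub_self, Nat.centralBinom_zero, mul_one]
        congr 1
        refine Finset.sum_congr rfl fun i hi => ?_
        simp only [Finset.mem_range] at hi
        congr 2
        omega
      have hK := keyK n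
      rw [hT] at h0
      linarith

/-- The cons map from sigma type to compositions. -/
def consComp (n : ℕ) (p : Σ i : Fin (n + 1), Composition (n - (i : ℕ))) :
    Composition (n + 1) :=
  ⟨((p.1 : ℕ) + 1) :: p.2.blocks,
    by
      intro j hj
      rcases List.mem_cons.mp hj with h | h
      · omega
      · exact p.2.blocks_pos h,
    by
      have h1 : p.2.blocks.sum = n - (p.1 : ℕ) := p.2.blocks_sum
      have h2 : (p.1 : ℕ) < n + 1 := p.1.isLt
      simp only [List.sum_cons, h1]
      omega⟩

lemma consComp_bijective (n : ℕ) : Function.Bijective (consComp n) := by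
  constructor
  · rintro ⟨⟨i, hi⟩, d⟩ ⟨⟨j, hj⟩, e⟩ h
    have hb : (i + 1) :: d.blocks = (j + 1) :: e.blocks := congrArg Composition.blocks h
    have h1 : i + 1 = j + 1 := by injection hb
    have h2 : d.blocks = e.blocks := by injection hb
    have hij : i = j := by omega
    subst hij
    have : d = e := Composition.ext h2
    subst this
    rfl
  · rintro ⟨bl, hpos, hsum⟩
    cases bl with
    | nil => simp at hsum
    | cons a l =>
      have ha : 0 < a := hpos (List.mem_cons_self : a ∈ a :: l)
      have hs : a + l.sum = n + 1 := by simpa using hsum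
      refine ⟨⟨⟨a - 1, by omega⟩, ⟨l, fun h => hpos (List.mem_cons_of_mem _ h),
        by show l.sum = n - (a - 1); omega⟩⟩, ?_⟩
      apply Composition.ext
      show (a - 1 + 1) :: l = a :: l
      congr 1
      omega

lemma S_succ (n : ℕ) :
    ∑ c : Composition (n + 1), (c.blocks.map catalan).prod
      = ∑ i ∈ range (n + 1),
          catalan (i + 1) * ∑ d : Composition (n - i), (d.blocks.map catalan).prod := by
  have h1 : ∑ p : Σ i : Fin (n + 1), Composition (n - (i : ℕ)),
      ((consComp n p).blocks.map catalan).prod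
      = ∑ c : Composition (n + 1), (c.blocks.map catalan).prod :=
    Fintype.sum_bijective (consComp n) (consComp_bijective n) _ _ (fun _ => rfl)
  rw [← h1]
  rw [← Finset.univ_sigma_univ, Finset.sum_sigma]
  rw [Finset.sum_range
    (fun i => catalan (i + 1) * ∑ d : Composition (n - i), (d.blocks.map catalan).prod)]
  refine Finset.sum_congr rfl fun a _ => ?_
  rw [Finset.mul_sum]
  refine Finset.sum_congr rfl fun d _ => ?_
  show ((((a : ℕ) + 1) :: d.blocks).map catalan).prod = _
  rw [List.map_cons, List.prod_cons]

lemma S_zero : ∑ c : Composition 0, (c.blocks.map catalan).prod = 1 := by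
  have hblocks : ∀ c : Composition 0, c.blocks = [] := by
    intro c
    cases h : c.blocks with
    | nil => rfl
    | cons a l =>
      have ha : 0 < a := c.blocks_pos (h ▸ (List.mem_cons_self : a ∈ a :: l))
      have hs := c.blocks_sum
      rw [h] at hs
      simp at hs
      omega
  calc ∑ c : Composition 0, (c.blocks.map catalan).prod
      = ∑ _c : Composition 0, 1 := by
        refine Finset.sum_congr rfl fun c _ => ?_
        rw [hblocks c]
        rfl
    _ = Fintype.card (Composition 0) := by
        rw [Finset.sum_const, smul_eq_mul, mul_one, Finset.card_univ]
    _ = 1 := by rw [composition_card]; norm_num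

lemma two_mul_S : ∀ m : ℕ, 0 < m →
    2 * ∑ c : Composition m, (c.blocks.map catalan).prod = Nat.centralBinom m := by
  intro m
  induction m using Nat.strong_induction_on with
  | _ m IH =>
    intro hm
    match m, IH with
    | Nat.succ n, IH =>
      show 2 * ∑ c : Composition (n + 1), (c.blocks.map catalan).prod
        = Nat.centralBinom (n + 1)
      rw [S_succ n]
      rw [Finset.sum_range_succ]
      rw [Nat.sub_self, S_zero, mul_one]
      have hW : 2 * ∑ i ∈ range n,
          catalan (i + 1) * ∑ d : Composition (n - i), (d.blocks.map catalan).prod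
          = ∑ i ∈ range n, catalan (i + 1) * Nat.centralBinom (n - i) := by
        rw [Finset.mul_sum]
        refine Finset.sum_congr rfl fun i hi => ?_
        simp only [Finset.mem_range] at hi
        have hpos : 0 < n - i := by omega
        have hIH := IH (n - i) (by omega) hpos
        calc 2 * (catalan (i + 1) * ∑ d : Composition (n - i), (d.blocks.map catalan).prod)
            = catalan (i + 1)
              * (2 * ∑ d : Composition (n - i), (d.blocks.map catalan).prod) := by ring
          _ = catalan (i + 1) * Nat.centralBinom (n - i) := by rw [hIH]
      -- split L(n+1) at both ends
      have hLsplit : ∑ k ∈ range (n + 2), catalan k * Nat.centralBinom (n + 1 - k)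
          = Nat.centralBinom (n + 1)
            + ∑ i ∈ range n, catalan (i + 1) * Nat.centralBinom (n - i)
            + catalan (n + 1) := by
        rw [Finset.sum_range_succ
          (fun k => catalan k * Nat.centralBinom (n + 1 - k)) (n + 1)]
        rw [Finset.sum_range_succ'
          (fun k => catalan k * Nat.centralBinom (n + 1 - k)) n]
        simp only [Nat.sub_self, Nat.centralBinom_zero, mul_one, Nat.succ_sub_succ,
          catalan_zero, one_mul, Nat.sub_zero]
        ring
      have hJ := convJ (n + 1)
      have hK := keyK n
      rw [mul_add, hW]
      linarith

theorem stmt13 (m : ℕ) (hm : 0 < m) :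
    2 * ∑ c : Composition m, (c.blocks.map catalan).prod = Nat.choose (2 * m) m := by
  rw [two_mul_S m hm]
  rfl
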